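/- Let c : ℝ → ℝⁿ be a smooth curve with c(0) = x and c'(0) = 0, …, c^{(k−1)}(0) = 0 for some k ≥ 1. Then for all smooth functions f, g : ℝⁿ → ℝ, the k-th derivative at 0 satisfies the Leibniz-type rule ((f·g)∘c)^{(k)}(0) = (f∘c)^{(k)}(0)·g(x) + f(x)·(g∘c)^{(k)}(0); in particular, the map f ↦ (f∘c)^{(k)}(0) is a derivation at x, so c^{(k)}(0) is a well-defined tangent vector at x. -/

import Mathlib

noncomputable section


open Finset
open scoped ContDiff

lemma pascal_smul_sum {G : Type*} [AddCommGroup G] [Module ℝ G] (n : ℕ) (T : ℕ → G) :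
    ∑ i ∈ Finset.range (n + 2), ((n + 1).choose i : ℝ) • T i
      = ∑ i ∈ Finset.range (n + 1), (n.choose i : ℝ) • T (i + 1) +
        ∑ i ∈ Finset.range (n + 1), (n.choose i : ℝ) • T i := by
  rw [Finset.sum_range_succ' (fun i => ((n + 1).choose i : ℝ) • T i) (n + 1)]
  simp only [Nat.choose_succ_succ, Nat.cast_add, add_smul, Finset.sum_add_distrib,
    Nat.choose_zero_right, Nat.cast_one, one_smul]
  have h2 : ∑ i ∈ Finset.range (n + 1), (n.choose (i + 1) : ℝ) • T (i + 1) +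
      (n.choose 0 : ℝ) • T 0 = ∑ i ∈ Finset.range (n + 1), (n.choose i : ℝ) • T i := by
    rw [← Finset.sum_range_succ' (fun i => (n.choose i : ℝ) • T i) (n + 1),
      Finset.sum_range_succ]
    simp [Nat.choose_succ_self]
  simp only [Nat.choose_zero_right, Nat.cast_one, one_smul] at h2
  rw [add_assoc, h2]

lemma contDiff_iteratedDeriv {F : Type*} [NormedAddCommGroup F] [NormedSpace ℝ F]
    {u : ℝ → F} (hu : ContDiff ℝ ∞ u) (i : ℕ) :
    ContDiff ℝ ∞ (iteratedDeriv i u) := by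
  rw [iteratedDeriv_eq_iterate]
  exact hu.iterate_deriv i

lemma hasDerivAt_iteratedDeriv {F : Type*} [NormedAddCommGroup F] [NormedSpace ℝ F]
    {u : ℝ → F} (hu : ContDiff ℝ ∞ u) (i : ℕ) (x : ℝ) :
    HasDerivAt (iteratedDeriv i u) (iteratedDeriv (i + 1) u x) x := by
  rw [iteratedDeriv_succ]
  exact (((contDiff_iteratedDeriv hu i).differentiable
    (by simp)) x).hasDerivAt

/-- **Leibniz formula** for iterated derivatives through a bilinear map. -/
lemma iteratedDeriv_bilinear {E F G : Type*} [NormedAddCommGroup E] [NormedSpace ℝ E]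
    [NormedAddCommGroup F] [NormedSpace ℝ F] [NormedAddCommGroup G] [NormedSpace ℝ G]
    (B : E →L[ℝ] F →L[ℝ] G) {u : ℝ → E} {v : ℝ → F}
    (hu : ContDiff ℝ ∞ u) (hv : ContDiff ℝ ∞ v) (n : ℕ) (x : ℝ) :
    iteratedDeriv n (fun t => B (u t) (v t)) x =
      ∑ i ∈ Finset.range (n + 1),
        (n.choose i : ℝ) • B (iteratedDeriv i u x) (iteratedDeriv (n - i) v x) := by
  induction n generalizing x with
  | zero => simp [iteratedDeriv_zero]
  | succ n ih =>
    have hD : ∀ y : ℝ, HasDerivAt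
        (fun x => ∑ i ∈ Finset.range (n + 1),
          (n.choose i : ℝ) • B (iteratedDeriv i u x) (iteratedDeriv (n - i) v x))
        (∑ i ∈ Finset.range (n + 1), (n.choose i : ℝ) •
          (B (iteratedDeriv (i + 1) u y) (iteratedDeriv (n - i) v y) +
           B (iteratedDeriv i u y) (iteratedDeriv (n - i + 1) v y))) y := by
      intro y
      refine HasDerivAt.fun_sum fun i _ => HasDerivAt.const_smul _ ?_
      have h1 : HasDerivAt (fun x => B (iteratedDeriv i u x))
          (B (iteratedDeriv (i + 1) u y)) y :=
        B.hasFDerivAt.comp_hasDerivAt y (hasDerivAt_iteratedDeriv hu i y)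
      exact h1.clm_apply (hasDerivAt_iteratedDeriv hv (n - i) y)
    rw [iteratedDeriv_succ]
    have heq : iteratedDeriv n (fun t => B (u t) (v t)) =
        fun x => ∑ i ∈ Finset.range (n + 1),
          (n.choose i : ℝ) • B (iteratedDeriv i u x) (iteratedDeriv (n - i) v x) :=
      funext fun y => ih y
    rw [heq, (hD x).deriv]
    set T : ℕ → G := fun i => B (iteratedDeriv i u x) (iteratedDeriv (n + 1 - i) v x) with hT
    calc ∑ i ∈ Finset.range (n + 1), (n.choose i : ℝ) •
          (B (iteratedDeriv (i + 1) u x) (iteratedDeriv (n - i) v x) +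
           B (iteratedDeriv i u x) (iteratedDeriv (n - i + 1) v x))
        = ∑ i ∈ Finset.range (n + 1), ((n.choose i : ℝ) • T (i + 1) + (n.choose i : ℝ) • T i) := by
          refine Finset.sum_congr rfl fun i hi => ?_
          rw [Finset.mem_range] at hi
          simp only [smul_add, hT]
          have e1 : n + 1 - (i + 1) = n - i := by omega
          have e2 : n + 1 - i = n - i + 1 := by omega
          rw [e1, e2]
      _ = ∑ i ∈ Finset.range (n + 2), ((n + 1).choose i : ℝ) • T i := by
          rw [Finset.sum_add_distrib, pascal_smul_sum]
      _ = ∑ i ∈ Finset.range (n + 1 + 1), ((n + 1).choose i : ℝ) •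
            B (iteratedDeriv i u x) (iteratedDeriv (n + 1 - i) v x) := rfl

/-- Vanishing of intermediate derivatives of `F ∘ c` along a flat curve. -/
lemma iteratedDeriv_comp_flat_curve_eq_zero {n : ℕ} {c : ℝ → Fin n → ℝ}
    (hc : ContDiff ℝ ∞ c) {k : ℕ}
    (hflat : ∀ j, 1 ≤ j → j < k → iteratedDeriv j c 0 = 0)
    (F : (Fin n → ℝ) → ℝ) (hF : ContDiff ℝ ∞ F)
    {j : ℕ} (hj1 : 1 ≤ j) (hjk : j < k) :
    iteratedDeriv j (fun t => F (c t)) 0 = 0 := by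
  obtain ⟨m, rfl⟩ : ∃ m, j = m + 1 := ⟨j - 1, by omega⟩
  have hderiv : deriv (fun t => F (c t)) = fun t => (fderiv ℝ F (c t)) (deriv c t) := by
    funext t
    exact (((hF.differentiable (by simp) (c t)).hasFDerivAt).comp_hasDerivAt t
      ((hc.differentiable (by simp) t).hasDerivAt)).deriv
  rw [iteratedDeriv_succ', hderiv]
  have hu : ContDiff ℝ ∞ (fun t => fderiv ℝ F (c t)) :=
    (hF.fderiv_right (by simp)).comp hc
  have hv : ContDiff ℝ ∞ (deriv c) := (contDiff_infty_iff_deriv.mp hc).2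
  have key := iteratedDeriv_bilinear
    ((ContinuousLinearMap.apply ℝ ℝ).flip : ((Fin n → ℝ) →L[ℝ] ℝ) →L[ℝ] (Fin n → ℝ) →L[ℝ] ℝ)
    hu hv m 0
  simp only [ContinuousLinearMap.flip_apply, ContinuousLinearMap.apply_apply] at key
  rw [key]
  refine Finset.sum_eq_zero fun i hi => ?_
  rw [Finset.mem_range] at hi
  have hz : iteratedDeriv (m - i) (deriv c) 0 = 0 := by
    rw [← iteratedDeriv_succ']
    exact hflat (m - i + 1) (by omega) (by omega)
  rw [hz]
  simp


/-- **Leibniz rule for the `k`-th derivative along a flat curve.**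
Let `c : ℝ → ℝⁿ` be a smooth curve with `c(0) = x` and vanishing derivatives of orders
`1, …, k−1` at `0`.  Then for all smooth `f, g : ℝⁿ → ℝ`,
`((f·g)∘c)^{(k)}(0) = (f∘c)^{(k)}(0)·g(x) + f(x)·(g∘c)^{(k)}(0)`; in particular
`f ↦ (f∘c)^{(k)}(0)` is a derivation at `x`, so `c^{(k)}(0)` is a well-defined tangent
vector at `x`. -/
theorem kth_derivative_is_derivation {n : ℕ} (c : ℝ → Fin n → ℝ)
    (hc : ContDiff ℝ (⊤ : ℕ∞) c) (x : Fin n → ℝ) (hc0 : c 0 = x)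
    (k : ℕ) (hk : 1 ≤ k)
    (hflat : ∀ j, 1 ≤ j → j < k → iteratedDeriv j c 0 = 0)
    (f g : (Fin n → ℝ) → ℝ)
    (hf : ContDiff ℝ (⊤ : ℕ∞) f) (hg : ContDiff ℝ (⊤ : ℕ∞) g) :
    iteratedDeriv k (fun t => f (c t) * g (c t)) 0 =
      iteratedDeriv k (fun t => f (c t)) 0 * g x +
      f x * iteratedDeriv k (fun t => g (c t)) 0 := by
  have hc' : ContDiff ℝ ∞ c := hc
  have hu : ContDiff ℝ ∞ (fun t => f (c t)) := (hf : ContDiff ℝ ∞ f).comp hc'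
  have hv : ContDiff ℝ ∞ (fun t => g (c t)) := (hg : ContDiff ℝ ∞ g).comp hc'
  have key := iteratedDeriv_bilinear (ContinuousLinearMap.mul ℝ ℝ) hu hv k 0
  simp only [ContinuousLinearMap.mul_apply'] at key
  rw [key]
  obtain ⟨m, rfl⟩ : ∃ m, k = m + 1 := ⟨k - 1, by omega⟩
  rw [Finset.sum_range_succ]
  have hmid : ∑ i ∈ Finset.range (m + 1), ((m + 1).choose i : ℝ) •
      (iteratedDeriv i (fun t => f (c t)) 0 * iteratedDeriv (m + 1 - i) (fun t => g (c t)) 0) =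
      f x * iteratedDeriv (m + 1) (fun t => g (c t)) 0 := by
    rw [Finset.sum_eq_single_of_mem 0 (Finset.mem_range.mpr (by omega))]
    · simp [iteratedDeriv_zero, hc0]
    · intro i hi hi0
      rw [Finset.mem_range] at hi
      have : iteratedDeriv i (fun t => f (c t)) 0 = 0 :=
        iteratedDeriv_comp_flat_curve_eq_zero hc' hflat f hf (by omega) (by omega)
      rw [this]
      simp
  rw [hmid]
  simp [iteratedDeriv_zero, hc0]
  ring
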